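/- Let R be an integral domain. Every finite partition of R has at least one cell that is both additively central in (R, +) and multiplicatively central in (R \ {0}, ·) if and only if R is a large integral domain (every nonzero ideal of R has finite additive index). -/

import Mathlib

/-- Product of ultrafilters on a semigroup `S` (the restriction to `βS` of the
Stone–Čech extension of the multiplication):
`A ∈ umul p q ↔ {x | {y | x * y ∈ A} ∈ q} ∈ p`. -/
def umul {S : Type*} [Semigroup S] (p q : Ultrafilter S) : Ultrafilter S :=
  p.bind fun x => q.map (x * ·)

/-- `p` is a minimal idempotent of `(βS, ·)`: `p` is idempotent and minimal for the
order `q ≤ p ↔ q·p = p·q = q` on idempotents. -/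
def IsMinimalIdempotent {S : Type*} [Semigroup S] (p : Ultrafilter S) : Prop :=
  umul p p = p ∧ ∀ q : Ultrafilter S, umul q q = q →
    umul q p = q → umul p q = q → q = p

/-- `A` is central in the semigroup `(S, ·)`: `A` belongs to some minimal idempotent
ultrafilter. -/
def Central {S : Type*} [Semigroup S] (A : Set S) : Prop :=
  ∃ p : Ultrafilter S, IsMinimalIdempotent p ∧ A ∈ p

/-- Sum of ultrafilters on an additive semigroup `S`:
`A ∈ uadd p q ↔ {x | {y | x + y ∈ A} ∈ q} ∈ p`. -/
def uadd {S : Type*} [AddSemigroup S] (p q : Ultrafilter S) : Ultrafilter S :=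
  p.bind fun x => q.map (x + ·)

/-- `p` is a minimal idempotent of `(βS, +)`. -/
def IsMinimalIdempotentAdd {S : Type*} [AddSemigroup S] (p : Ultrafilter S) : Prop :=
  uadd p p = p ∧ ∀ q : Ultrafilter S, uadd q q = q →
    uadd q p = q → uadd p q = q → q = p

/-- `A` is central in the additive semigroup `(S, +)`. -/
def AddCentral {S : Type*} [AddSemigroup S] (A : Set S) : Prop :=
  ∃ p : Ultrafilter S, IsMinimalIdempotentAdd p ∧ A ∈ p

/-- The multiplicative semigroup `(R \ {0}, ·)` of an integral domain. -/
instance nzSemigroup {R : Type*} [CommRing R] [IsDomain R] :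
    Semigroup {x : R // x ≠ 0} where
  mul a b := ⟨a.1 * b.1, mul_ne_zero a.2 b.2⟩
  mul_assoc a b c := Subtype.ext (mul_assoc a.1 b.1 c.1)

/-- `A ⊆ R` is multiplicatively central in `(R \ {0}, ·)`. -/
def MulCentralNZ {R : Type*} [CommRing R] [IsDomain R] (A : Set R) : Prop :=
  Central {x : {x : R // x ≠ 0} | (x : R) ∈ A}

/-- `R` is a large integral domain: every nonzero ideal has finite (additive) index. -/
def IsLargeID (R : Type*) [CommRing R] [IsDomain R] : Prop :=
  ∀ I : Ideal R, I ≠ ⊥ → Finite (R ⧸ I)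



open Filter Set

attribute [local instance] Ultrafilter.semigroup Ultrafilter.addSemigroup

section Core
variable {S : Type*} [Semigroup S]

@[to_additive mem_uadd'] theorem mem_umul' {p q : Ultrafilter S} {A : Set S} :
    A ∈ p * q ↔ {x | {y | x * y ∈ A} ∈ q} ∈ p := Iff.rfl

@[to_additive mem_pure_uadd] theorem mem_pure_umul {a : S} {q : Ultrafilter S} {A : Set S} :
    A ∈ (pure a : Ultrafilter S) * q ↔ {y | a * y ∈ A} ∈ q := Iff.rfl

/-- Closed left ideals of `βS`. -/
@[to_additive AddLIdeal] def LIdeal (L : Set (Ultrafilter S)) : Prop :=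
  L.Nonempty ∧ IsClosed L ∧ ∀ u : Ultrafilter S, ∀ x ∈ L, u * x ∈ L

/-- Minimal closed left ideals of `βS`. -/
@[to_additive AddMinLIdeal] def MinLIdeal (L : Set (Ultrafilter S)) : Prop :=
  LIdeal L ∧ ∀ L', LIdeal L' → L' ⊆ L → L' = L

@[to_additive addLIdeal_univ] theorem lideal_univ [Nonempty S] : LIdeal (Set.univ : Set (Ultrafilter S)) :=
  ⟨⟨pure Classical.ofNonempty, trivial⟩, isClosed_univ, fun _ _ _ => trivial⟩

@[to_additive exists_addMinLIdeal] theorem exists_minLIdeal {L₀ : Set (Ultrafilter S)} (h : LIdeal L₀) :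
    ∃ L, MinLIdeal L ∧ L ⊆ L₀ := by
  have hZ : ∀ c ⊆ {L : Set (Ultrafilter S) | LIdeal L ∧ L ⊆ L₀}, IsChain (· ⊆ ·) c →
      c.Nonempty → ∃ lb ∈ {L | LIdeal L ∧ L ⊆ L₀}, ∀ s ∈ c, lb ⊆ s := by
    rintro c hc hchain ⟨L₁, hL₁⟩
    refine ⟨⋂₀ c, ⟨⟨?_, ?_, ?_⟩, ?_⟩, fun s hs => sInter_subset_of_mem hs⟩
    · -- nonempty: directed family of nonempty compact closed sets
      have hdir : Directed (· ⊇ ·) (fun L : c => (L : Set (Ultrafilter S))) := by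
        intro a b
        rcases hchain.total a.2 b.2 with hab | hba
        · exact ⟨a, subset_rfl, hab⟩
        · exact ⟨b, hba, subset_rfl⟩
      haveI : Nonempty c := ⟨⟨L₁, hL₁⟩⟩
      have hne := IsCompact.nonempty_iInter_of_directed_nonempty_isCompact_isClosed
        (fun L : c => (L : Set (Ultrafilter S))) hdir
        (fun L => (hc L.2).1.1) (fun L => (hc L.2).1.2.1.isCompact)
        (fun L => (hc L.2).1.2.1)
      rwa [sInter_eq_iInter]
    · exact isClosed_sInter fun L hL => (hc hL).1.2.1
    · intro u x hx L hL
      exact (hc hL).1.2.2 u x (hx L hL)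
    · exact (sInter_subset_of_mem hL₁).trans (hc hL₁).2
  obtain ⟨m, hmL₀, hmin⟩ := zorn_superset_nonempty _ hZ L₀ ⟨h, subset_rfl⟩
  exact ⟨m, ⟨hmin.1.1, fun L' hL' hsub =>
    subset_antisymm hsub (hmin.2 ⟨hL', hsub.trans hmL₀⟩ hsub)⟩, hmL₀⟩

@[to_additive range_add_right_eq] theorem range_mul_right_eq {L : Set (Ultrafilter S)} (hL : MinLIdeal L)
    {x : Ultrafilter S} (hx : x ∈ L) : Set.range (· * x) = L := by
  refine hL.2 _ ⟨⟨x * x, ⟨x, rfl⟩⟩, ?_, ?_⟩ ?_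
  · exact (isCompact_range (Ultrafilter.continuous_mul_left x)).isClosed
  · rintro u _ ⟨v, rfl⟩
    exact ⟨u * v, mul_assoc u v x⟩
  · rintro _ ⟨u, rfl⟩
    exact hL.1.2.2 u x hx

@[to_additive mem_closure_pure_add] theorem mem_closure_pure_mul {L : Set (Ultrafilter S)} (hL : MinLIdeal L)
    {p q : Ultrafilter S} (hp : p ∈ L) (hq : q ∈ L) :
    p ∈ closure (Set.range fun s : S => (pure s : Ultrafilter S) * q) := by
  have h1 : Set.range (· * q) ⊆ closure (Set.range fun s : S => (pure s : Ultrafilter S) * q) := by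
    have : Set.range (· * q) = (· * q) '' closure (Set.range (pure : S → Ultrafilter S)) := by
      rw [denseRange_pure.closure_range, image_univ]
    rw [this]
    refine (image_closure_subset_closure_image (Ultrafilter.continuous_mul_left q)).trans ?_
    rw [← Set.range_comp]
    rfl
  rw [← range_mul_right_eq hL hq] at hp
  exact h1 hp

@[to_additive exists_idem_of_addMinLIdeal] theorem exists_idem_of_minLIdeal {L : Set (Ultrafilter S)} (hL : MinLIdeal L) :
    ∃ e ∈ L, e * e = e :=
  exists_idempotent_in_compact_subsemigroup Ultrafilter.continuous_mul_left L hL.1.1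
    (hL.1.2.1.isCompact) (fun x _ y hy => hL.1.2.2 x y hy)

/-- local copy of minimal idempotent predicate (multiplicative). -/
@[to_additive AddMinIdem] def MinIdem (p : Ultrafilter S) : Prop :=
  p * p = p ∧ ∀ q : Ultrafilter S, q * q = q → q * p = q → p * q = q → q = p

@[to_additive addMinIdem_of_idem_mem_addMinLIdeal] theorem minIdem_of_idem_mem_minLIdeal {L : Set (Ultrafilter S)} (hL : MinLIdeal L)
    {e : Ultrafilter S} (he : e ∈ L) (hee : e * e = e) : MinIdem e := by
  refine ⟨hee, fun q hq hqe heq => ?_⟩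
  have hqL : q ∈ L := by rw [← hqe]; exact hL.1.2.2 q e he
  have : e ∈ Set.range (· * q) := by rw [range_mul_right_eq hL hqL]; exact he
  obtain ⟨u, hu⟩ := this
  have : e * q = e := by rw [← hu, mul_assoc, hq]
  rw [← heq, this]

@[to_additive exists_addMinLIdeal_mem_of_addMinIdem] theorem exists_minLIdeal_mem_of_minIdem {p : Ultrafilter S} (hp : MinIdem p) :
    ∃ L, MinLIdeal L ∧ p ∈ L := by
  have hMp : LIdeal (Set.range (· * p)) := by
    refine ⟨⟨p * p, ⟨p, rfl⟩⟩, (isCompact_range (Ultrafilter.continuous_mul_left p)).isClosed, ?_⟩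
    rintro u _ ⟨v, rfl⟩
    exact ⟨u * v, mul_assoc u v p⟩
  obtain ⟨L, hL, hLsub⟩ := exists_minLIdeal hMp
  obtain ⟨e, heL, hee⟩ := exists_idem_of_minLIdeal hL
  obtain ⟨u, hu⟩ := hLsub heL
  have hep : e * p = e := by rw [← hu, mul_assoc, hp.1]
  have h1 : (p * e) * (p * e) = p * e := by
    rw [mul_assoc, ← mul_assoc e p e, hep, hee]
  have h2 : (p * e) * p = p * e := by rw [mul_assoc, hep]
  have h3 : p * (p * e) = p * e := by rw [← mul_assoc, hp.1]
  have : p * e = p := hp.2 (p * e) h1 h2 h3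
  refine ⟨L, hL, ?_⟩
  rw [← this]
  exact hL.1.2.2 p e heL

@[to_additive exists_addMinIdem] theorem exists_minIdem [Nonempty S] : ∃ p : Ultrafilter S, MinIdem p := by
  obtain ⟨L, hL, -⟩ := exists_minLIdeal (lideal_univ (S := S))
  obtain ⟨e, heL, hee⟩ := exists_idem_of_minLIdeal hL
  exact ⟨e, minIdem_of_idem_mem_minLIdeal hL heL hee⟩

/-- any set absorbing on both sides belongs to every minimal idempotent. -/
@[to_additive addMinIdem_mem_absorbing] theorem minIdem_mem_absorbing {p : Ultrafilter S} (hp : MinIdem p)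
    {J : Set S} (hne : J.Nonempty) (habsR : ∀ x ∈ J, ∀ y, x * y ∈ J)
    (habsL : ∀ x, ∀ y ∈ J, x * y ∈ J) : J ∈ p := by
  obtain ⟨L, hL, hpL⟩ := exists_minLIdeal_mem_of_minIdem hp
  obtain ⟨j, hj⟩ := hne
  set w : Ultrafilter S := (pure j : Ultrafilter S) * p with hw
  have hwL : w ∈ L := hL.1.2.2 _ p hpL
  have hJw : J ∈ w := by
    rw [hw, mem_pure_umul]
    exact Filter.univ_mem' fun y => habsR j hj y
  have : p ∈ Set.range (· * w) := by rw [range_mul_right_eq hL hwL]; exact hpL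
  obtain ⟨u, hu⟩ := this
  rw [← hu, mem_umul']
  refine Filter.univ_mem' fun x => ?_
  have hsub : J ⊆ {y | x * y ∈ J} := fun y hy => habsL x y hy
  exact Filter.mem_of_superset (f := (w : Filter S)) hJw hsub

end Core

section Maps
variable {S T : Type*}

theorem umap_congr {f g : S → T} {p : Ultrafilter S} (h : {x | f x = g x} ∈ p) :
    p.map f = p.map g := by
  apply Ultrafilter.coe_inj.mp
  apply Filter.ext; intro A
  show f ⁻¹' A ∈ p ↔ g ⁻¹' A ∈ p
  constructor <;> intro hA
  · refine Filter.mem_of_superset (f := (p : Filter S)) (Filter.inter_mem hA h) ?_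
    rintro x ⟨hx1, hx2⟩
    show g x ∈ A
    rw [← hx2]; exact hx1
  · refine Filter.mem_of_superset (f := (p : Filter S)) (Filter.inter_mem hA h) ?_
    rintro x ⟨hx1, hx2⟩
    show f x ∈ A
    rw [hx2]; exact hx1

theorem umap_inj {f : S → T} (hf : Function.Injective f) :
    Function.Injective (Ultrafilter.map f) := by
  intro p q h
  apply Ultrafilter.coe_inj.mp
  apply Filter.ext; intro A
  have key : ∀ r : Ultrafilter S, A ∈ r ↔ f '' A ∈ r.map f := by
    intro r
    rw [Ultrafilter.mem_map, hf.preimage_image A]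
  rw [Ultrafilter.mem_coe, Ultrafilter.mem_coe, key p, key q, h]

theorem umap_range_char {f : S → T} [Nonempty S] (hf : Function.Injective f)
    {u : Ultrafilter T} (hu : Set.range f ∈ u) : ∃ p : Ultrafilter S, p.map f = u := by
  refine ⟨u.map (Function.invFun f), ?_⟩
  rw [Ultrafilter.map_map]
  have : u.map (f ∘ Function.invFun f) = u.map id := by
    apply umap_congr
    refine Filter.mem_of_superset (f := (u : Filter T)) hu ?_
    rintro x ⟨a, rfl⟩
    show f (Function.invFun f (f a)) = f a
    rw [Function.leftInverse_invFun hf a]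
  rw [this, Ultrafilter.map_id]

end Maps

section MapsMul

attribute [local instance] Ultrafilter.semigroup Ultrafilter.addSemigroup
variable {S T : Type*} [Semigroup S] [Semigroup T]

@[to_additive] theorem umap_mul (f : S → T) (hf : ∀ x y, f (x * y) = f x * f y)
    (p q : Ultrafilter S) : (p * q).map f = p.map f * q.map f := by
  apply Ultrafilter.coe_inj.mp
  apply Filter.ext; intro A
  rw [Ultrafilter.mem_coe, Ultrafilter.mem_coe, Ultrafilter.mem_map, mem_umul', mem_umul',
    Ultrafilter.mem_map]
  have : f ⁻¹' {a | {b | a * b ∈ A} ∈ q.map f} = {x | {y | x * y ∈ f ⁻¹' A} ∈ q} := by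
    ext x
    simp only [Set.mem_preimage, Set.mem_setOf_eq, Ultrafilter.mem_map]
    have heq : f ⁻¹' {b | f x * b ∈ A} = {y | x * y ∈ f ⁻¹' A} := by
      ext y
      simp only [Set.mem_preimage, Set.mem_setOf_eq, ← hf]
    rw [heq]
    exact Iff.rfl
  rw [this]

end MapsMul

section Transfer
attribute [local instance] Ultrafilter.semigroup Ultrafilter.addSemigroup
variable {S : Type*}

@[to_additive] theorem lideal_range_mul [Semigroup S] (p : Ultrafilter S) :
    LIdeal (Set.range (· * p)) := by
  refine ⟨⟨p * p, ⟨p, rfl⟩⟩, (isCompact_range (Ultrafilter.continuous_mul_left p)).isClosed, ?_⟩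
  rintro u _ ⟨v, rfl⟩
  exact ⟨u * v, mul_assoc u v p⟩

/-- transfer of minimal idempotents along an injective endo-homomorphism with
finite-index range. -/
@[to_additive addMinIdem_map_of_finite_index] theorem minIdem_map_of_finite_index [Group S] (φ : S → S)
    (hhom : ∀ x y, φ (x * y) = φ x * φ y) (hinj : Function.Injective φ)
    (F : Finset S) (hcov : ∀ x : S, ∃ t ∈ F, ∃ h, x = t * φ h)
    {p : Ultrafilter S} (hp : MinIdem p) : MinIdem (p.map φ) := by
  set H : Set S := Set.range φ with hH
  set P : Ultrafilter S := p.map φ with hPdef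
  have hPP : P * P = P := by rw [hPdef, ← umap_mul φ hhom, hp.1]
  have hHP : H ∈ P := by
    rw [hPdef, Ultrafilter.mem_map]
    exact Filter.univ_mem' fun x => ⟨x, rfl⟩
  -- N := ultrafilters containing H is a subsemigroup
  have hNmul : ∀ u v : Ultrafilter S, H ∈ u → H ∈ v → H ∈ u * v := by
    intro u v hu hv
    rw [mem_umul']
    refine Filter.mem_of_superset (f := (u : Filter S)) hu ?_
    rintro _ ⟨a, rfl⟩
    refine Filter.mem_of_superset (f := (v : Filter S)) hv ?_
    rintro _ ⟨b, rfl⟩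
    exact ⟨a * b, hhom a b⟩
  -- minimality of P among idempotents of N
  have hNmin : ∀ Q : Ultrafilter S, H ∈ Q → Q * Q = Q → Q * P = Q → P * Q = Q → Q = P := by
    intro Q hHQ hQQ hQP hPQ
    obtain ⟨q, rfl⟩ := umap_range_char hinj hHQ
    have h1 : q * q = q := umap_inj hinj (by rw [umap_mul φ hhom, hQQ])
    have h2 : q * p = q := umap_inj hinj (by rw [umap_mul φ hhom, hQP])
    have h3 : p * q = q := umap_inj hinj (by rw [umap_mul φ hhom, hPQ])
    rw [hp.2 q h1 h2 h3]
  -- find a minimal closed left ideal inside βS * P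
  obtain ⟨L, hL, hLsub⟩ := exists_minLIdeal (lideal_range_mul P)
  have hfix : ∀ e ∈ L, e * P = e := by
    intro e he
    obtain ⟨u, hu⟩ := hLsub he
    rw [← hu, mul_assoc, hPP]
  -- find an element of L containing H, by translating any element of L
  obtain ⟨w, hwL⟩ := hL.1.1
  have hcoset : ∃ t ∈ F, {x | ∃ h, x = t * φ h} ∈ w := by
    by_contra hno
    push_neg at hno
    have hcompl : ∀ t ∈ F, {x | ∃ h, x = t * φ h}ᶜ ∈ w := fun t ht =>
      (Ultrafilter.compl_mem_iff_notMem).mpr (hno t ht)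
    have : ⋂ t ∈ (F : Set S), {x | ∃ h, x = t * φ h}ᶜ ∈ w :=
      (Filter.biInter_mem F.finite_toSet).mpr hcompl
    obtain ⟨x, hx⟩ := Ultrafilter.nonempty_of_mem this
    simp only [Set.mem_iInter, Set.mem_compl_iff, Set.mem_setOf_eq] at hx
    obtain ⟨t, htF, h, rfl⟩ := hcov x
    exact hx t htF ⟨h, rfl⟩
  obtain ⟨t, htF, hCt⟩ := hcoset
  have hw'L : (pure t⁻¹ : Ultrafilter S) * w ∈ L := hL.1.2.2 _ w hwL
  have hHw' : H ∈ (pure t⁻¹ : Ultrafilter S) * w := by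
    rw [mem_pure_umul]
    refine Filter.mem_of_superset (f := (w : Filter S)) hCt ?_
    rintro _ ⟨h, rfl⟩
    exact ⟨h, by rw [inv_mul_cancel_left]⟩
  -- idempotent in the compact subsemigroup L ∩ N
  have hLN : ∃ e ∈ L ∩ {u : Ultrafilter S | H ∈ u}, e * e = e := by
    refine exists_idempotent_in_compact_subsemigroup Ultrafilter.continuous_mul_left _
      ⟨_, hw'L, hHw'⟩ ((hL.1.2.1.inter (ultrafilter_isClosed_basic H)).isCompact) ?_
    rintro x ⟨hxL, hxN⟩ y ⟨hyL, hyN⟩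
    exact ⟨hL.1.2.2 x y hyL, hNmul x y hxN hyN⟩
  obtain ⟨e, ⟨heL, heN⟩, hee⟩ := hLN
  have heP : e * P = e := hfix e heL
  have hq'H : H ∈ P * e := hNmul P e hHP heN
  have hq'1 : (P * e) * (P * e) = P * e := by
    rw [mul_assoc, ← mul_assoc e P e, heP, hee]
  have hq'2 : (P * e) * P = P * e := by rw [mul_assoc, heP]
  have hq'3 : P * (P * e) = P * e := by rw [← mul_assoc, hPP]
  have hq'P : P * e = P := hNmin (P * e) hq'H hq'1 hq'2 hq'3
  have hPL : P ∈ L := by rw [← hq'P]; exact hL.1.2.2 P e heL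
  exact minIdem_of_idem_mem_minLIdeal hL hPL hPP

@[to_additive] theorem exists_pure_of_mul_pure [Group S] {p q : Ultrafilter S} {a : S}
    (h : p * q = pure a) : (∃ b, p = pure b) ∧ ∃ c, q = pure c := by
  have ha : ({a} : Set S) ∈ p * q := by rw [h]; exact Ultrafilter.mem_pure.mpr rfl
  rw [mem_umul'] at ha
  have hsingle : ∀ x : S, {y | x * y ∈ ({a} : Set S)} = {x⁻¹ * a} := by
    intro x
    ext y
    simp only [Set.mem_setOf_eq, Set.mem_singleton_iff, eq_inv_mul_iff_mul_eq]
  have hsub : {x | {y | x * y ∈ ({a} : Set S)} ∈ q}.Subsingleton := by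
    intro x₁ h₁ x₂ h₂
    rw [Set.mem_setOf_eq, hsingle] at h₁ h₂
    obtain ⟨y, hy₁, hy₂⟩ := Ultrafilter.nonempty_of_mem
      (Filter.inter_mem (f := (q : Filter S)) h₁ h₂)
    rw [Set.mem_singleton_iff] at hy₁ hy₂
    have : x₁⁻¹ * a = x₂⁻¹ * a := by rw [← hy₁, ← hy₂]
    exact inv_injective (mul_right_cancel this)
  obtain ⟨b, hbT, hpb⟩ := Ultrafilter.eq_pure_of_finite_mem hsub.finite ha
  refine ⟨⟨b, hpb⟩, ⟨b⁻¹ * a, ?_⟩⟩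
  rw [hpb] at h
  have : ({a} : Set S) ∈ (pure b : Ultrafilter S) * q := by
    rw [h]; exact Ultrafilter.mem_pure.mpr rfl
  rw [mem_pure_umul, hsingle] at this
  obtain ⟨c, hc, hqc⟩ := Ultrafilter.eq_pure_of_finite_mem (Set.finite_singleton _) this
  rw [Set.mem_singleton_iff] at hc
  rw [hqc, hc]

end Transfer

section Nonprincipal
attribute [local instance] Ultrafilter.semigroup Ultrafilter.addSemigroup
variable {S : Type*}

@[to_additive addMinIdem_nonprincipal] theorem minIdem_nonprincipal [Group S] [Infinite S]
    {p : Ultrafilter S} (hp : MinIdem p) (a : S) : p ≠ pure a := by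
  obtain ⟨L, hL, hpL⟩ := exists_minLIdeal_mem_of_minIdem hp
  have hhyp : ∀ b : S, (Filter.hyperfilter S : Ultrafilter S) ≠ pure b := by
    intro b hb
    exact Filter.notMem_hyperfilter_of_finite (Set.finite_singleton b)
      (hb ▸ Ultrafilter.mem_pure.mpr rfl)
  have hwL : (Filter.hyperfilter S : Ultrafilter S) * p ∈ L :=
    hL.1.2.2 _ p hpL
  have hpmem : p ∈ Set.range (· * ((Filter.hyperfilter S : Ultrafilter S) * p)) := by
    rw [range_mul_right_eq hL hwL]; exact hpL
  obtain ⟨u, hu⟩ := hpmem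
  intro hpa
  rw [hpa] at hu
  obtain ⟨-, c, hc⟩ := exists_pure_of_mul_pure hu
  obtain ⟨⟨b, hb⟩, -⟩ := exists_pure_of_mul_pure hc
  exact hhyp b hb

end Nonprincipal

section Pigeon

theorem not_mem_addMinIdem_of_infinite_index {R : Type*} [CommRing R] (I : Ideal R)
    (hinf : Infinite (R ⧸ I)) {p : Ultrafilter R} (hp : AddMinIdem p) : (I : Set R) ∉ p := by
  intro hIp
  obtain ⟨L, hL, hpL⟩ := exists_addMinLIdeal_mem_of_addMinIdem hp
  have hcover : L ⊆ ⋃ x : R, {u : Ultrafilter R | {y | x + y ∈ (I : Set R)} ∈ u} := by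
    intro q hq
    have hcl := mem_closure_pure_add hL hpL hq
    rcases mem_closure_iff.mp hcl _ (ultrafilter_isOpen_basic (I : Set R)) hIp
      with ⟨-, hmem, ⟨s, rfl⟩⟩
    exact Set.mem_iUnion.mpr ⟨s, by rwa [Set.mem_setOf_eq, mem_pure_uadd] at hmem⟩
  obtain ⟨t, ht⟩ := (hL.1.2.1.isCompact).elim_finite_subcover _
    (fun x : R => ultrafilter_isOpen_basic _) hcover
  -- representatives of t.card + 1 distinct residues
  have hemb : ∃ r : Fin (t.card + 1) → R, Function.Injective fun i => Ideal.Quotient.mk I (r i) := by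
    have e : Fin (t.card + 1) ↪ R ⧸ I :=
      (Fin.valEmbedding.trans (Infinite.natEmbedding (R ⧸ I)))
    choose r hr using fun i : Fin (t.card + 1) => Ideal.Quotient.mk_surjective (e i)
    exact ⟨r, fun i j hij => e.injective (by rw [← hr i, ← hr j]; exact hij)⟩
  obtain ⟨r, hrinj⟩ := hemb
  have hsel : ∀ i : Fin (t.card + 1), ∃ x ∈ t, {y | x + (r i + y) ∈ (I : Set R)} ∈ p := by
    intro i
    have hmemL : (pure (r i) : Ultrafilter R) + p ∈ L := hL.1.2.2 _ p hpL
    have := ht hmemL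
    rw [Set.mem_iUnion₂] at this
    obtain ⟨x, hxt, hx⟩ := this
    rw [Set.mem_setOf_eq, mem_pure_uadd] at hx
    exact ⟨x, hxt, hx⟩
  choose g hg1 hg2 using hsel
  obtain ⟨i, -, j, -, hij, hgij⟩ :=
    Finset.exists_ne_map_eq_of_card_lt_of_maps_to
      (s := (Finset.univ : Finset (Fin (t.card + 1)))) (t := t) (by simp) (fun i _ => hg1 i)
  obtain ⟨y, hy1, hy2⟩ := Ultrafilter.nonempty_of_mem
    (Filter.inter_mem (f := (p : Filter R)) (hg2 i) (hg2 j))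
  rw [Set.mem_setOf_eq] at hy1 hy2
  rw [hgij] at hy1
  have hsub : r i - r j ∈ I := by
    have := I.sub_mem hy1 hy2
    simpa using this
  exact hij (hrinj (Ideal.Quotient.eq.mpr hsub))

end Pigeon

theorem umap_continuous {α β : Type*} (f : α → β) : Continuous (Ultrafilter.map f) := by
  refine ultrafilterBasis_is_basis.continuous_iff.2 ?_
  rintro s ⟨A, rfl⟩
  exact ultrafilter_isOpen_basic (f ⁻¹' A)

section Bridges
attribute [local instance] Ultrafilter.semigroup Ultrafilter.addSemigroup

theorem isMinimalIdempotent_iff {S : Type*} [Semigroup S] {p : Ultrafilter S} :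
    IsMinimalIdempotent p ↔ MinIdem p := Iff.rfl

theorem isMinimalIdempotentAdd_iff {S : Type*} [AddSemigroup S] {p : Ultrafilter S} :
    IsMinimalIdempotentAdd p ↔ AddMinIdem p := Iff.rfl

theorem central_iff {S : Type*} [Semigroup S] {A : Set S} :
    Central A ↔ ∃ p : Ultrafilter S, MinIdem p ∧ A ∈ p := Iff.rfl

theorem addCentral_iff {S : Type*} [AddSemigroup S] {A : Set S} :
    AddCentral A ↔ ∃ p : Ultrafilter S, AddMinIdem p ∧ A ∈ p := Iff.rfl

end Bridges

section Assembly
attribute [local instance] Ultrafilter.semigroup Ultrafilter.addSemigroup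
variable {R : Type*} [CommRing R] [IsDomain R] [Infinite R]

/-- Forward direction: the partition property forces every nonzero ideal to
have finite additive index. -/
theorem forward_dir
    (hyp : ∀ k : ℕ, ∀ C : Fin k → Set R, (⋃ i, C i) = Set.univ →
      ∃ i, AddCentral (C i) ∧ MulCentralNZ (C i)) : IsLargeID R := by
  intro I hI0
  by_contra hfin
  rw [not_finite_iff_infinite] at hfin
  classical
  set C : Fin 2 → Set R := fun i => if i = 0 then (I : Set R) else ((I : Set R))ᶜ with hC
  have hcov : (⋃ i, C i) = Set.univ := by
    ext x
    simp only [Set.mem_iUnion, Set.mem_univ, iff_true]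
    by_cases hx : x ∈ (I : Set R)
    · exact ⟨0, by simp [hC, hx]⟩
    · exact ⟨1, by simp [hC, hx]⟩
  obtain ⟨i, hAdd, hMul⟩ := hyp 2 C hcov
  fin_cases i
  · obtain ⟨p, hp, hIp⟩ := hAdd
    rw [isMinimalIdempotentAdd_iff] at hp
    refine not_mem_addMinIdem_of_infinite_index I hfin hp ?_
    simpa [hC] using hIp
  · obtain ⟨q, hq, hmem⟩ := hMul
    rw [isMinimalIdempotent_iff] at hq
    obtain ⟨a, haI, ha0⟩ := Submodule.exists_mem_ne_zero_of_ne_bot hI0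
    have hJ : {x : {x : R // x ≠ 0} | (x : R) ∈ I} ∈ q := by
      refine minIdem_mem_absorbing hq ⟨⟨a, ha0⟩, haI⟩ ?_ ?_
      · rintro x hx y
        exact Ideal.mul_mem_right (y : R) I hx
      · rintro x y hy
        exact Ideal.mul_mem_left I (x : R) hy
    have hmem' : {x : {x : R // x ≠ 0} | (x : R) ∈ I}ᶜ ∈ q := by
      have : {x : {x : R // x ≠ 0} | (x : R) ∈ C 1} = {x : {x : R // x ≠ 0} | (x : R) ∈ I}ᶜ := by
        ext x; simp [hC]
      rw [← this]
      exact hmem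
    exact (Ultrafilter.compl_mem_iff_notMem.mp hmem') hJ

/-- Reverse direction: in a large integral domain every finite partition has a
doubly central cell. -/
theorem reverse_dir (hLarge : IsLargeID R) (k : ℕ) (C : Fin k → Set R)
    (hcov : (⋃ i, C i) = Set.univ) :
    ∃ i, AddCentral (C i) ∧ MulCentralNZ (C i) := by
  classical
  set Cset : Set (Ultrafilter R) := {P | ∀ A ∈ P, AddCentral A} with hCset
  have hCclosed : IsClosed Cset := by
    have : Cset = ⋂ A : {A : Set R // ¬ AddCentral A}, {P : Ultrafilter R | (A : Set R) ∈ P}ᶜ := by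
      ext P
      simp only [hCset, Set.mem_iInter, Set.mem_compl_iff, Set.mem_setOf_eq]
      constructor
      · intro h A hAP
        exact A.2 (h _ hAP)
      · intro h A hAP
        by_contra hnc
        exact h ⟨A, hnc⟩ hAP
    rw [this]
    exact isClosed_iInter fun A => (ultrafilter_isOpen_basic _).isClosed_compl
  -- dilation stability of Cset, using largeness
  have hdil : ∀ a : R, a ≠ 0 → ∀ P ∈ Cset, P.map (a * ·) ∈ Cset := by
    intro a ha P hP A hA
    rw [Ultrafilter.mem_map] at hA
    obtain ⟨p, hp, hBp⟩ := hP _ hA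
    rw [isMinimalIdempotentAdd_iff] at hp
    have hinj : Function.Injective (a * ·) := fun x y h => mul_left_cancel₀ ha h
    have hhom : ∀ x y : R, a * (x + y) = a * x + a * y := mul_add a
    haveI hfin : Finite (R ⧸ Ideal.span {a}) :=
      hLarge _ (by simpa [Ideal.span_singleton_eq_bot] using ha)
    -- coset representatives
    have hsec := fun c : R ⧸ Ideal.span {a} => Ideal.Quotient.mk_surjective c
    choose sec hsec using hsec
    set F : Finset R := (Set.finite_range sec).toFinset with hF
    have hcovF : ∀ x : R, ∃ t ∈ F, ∃ h, x = t + a * h := by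
      intro x
      refine ⟨sec (Ideal.Quotient.mk _ x), by simp [hF], ?_⟩
      have hmk : Ideal.Quotient.mk (Ideal.span {a}) (sec (Ideal.Quotient.mk _ x)) =
          Ideal.Quotient.mk (Ideal.span {a}) x := by rw [hsec]
      have hdvd : x - sec (Ideal.Quotient.mk _ x) ∈ Ideal.span {a} :=
        Ideal.Quotient.eq.mp hmk.symm
      obtain ⟨h, hh⟩ := Ideal.mem_span_singleton'.mp hdvd
      exact ⟨h, by rw [mul_comm a h, hh]; ring⟩
    have hmin' : AddMinIdem (p.map (a * ·)) :=
      addMinIdem_map_of_finite_index (a * ·) hhom hinj F hcovF hp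
    exact ⟨p.map (a * ·), isMinimalIdempotentAdd_iff.mpr hmin', Ultrafilter.mem_map.mpr hBp⟩
  -- a nonprincipal additive minimal idempotent
  obtain ⟨p₀, hp₀⟩ := exists_addMinIdem (S := R)
  have hp₀C : p₀ ∈ Cset := fun A hA => ⟨p₀, isMinimalIdempotentAdd_iff.mpr hp₀, hA⟩
  have hnz : ({(0 : R)} : Set R)ᶜ ∈ p₀ := by
    rw [Ultrafilter.compl_mem_iff_notMem]
    intro h0
    obtain ⟨b, -, hpb⟩ := Ultrafilter.eq_pure_of_finite_mem (Set.finite_singleton 0) h0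
    exact addMinIdem_nonprincipal hp₀ b hpb
  -- lift p₀ to the punctured domain
  set ρ : R → {x : R // x ≠ 0} := fun x => if h : x = 0 then ⟨1, one_ne_zero⟩ else ⟨x, h⟩ with hρ
  set q₀ : Ultrafilter {x : R // x ≠ 0} := p₀.map ρ with hq₀
  have hΦq₀ : q₀.map Subtype.val = p₀ := by
    rw [hq₀, Ultrafilter.map_map]
    have : p₀.map (Subtype.val ∘ ρ) = p₀.map id := by
      apply umap_congr
      refine Filter.mem_of_superset (f := (p₀ : Filter R)) hnz ?_
      intro x hx
      have hx0 : x ≠ 0 := by simpa using hx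
      show (ρ x).1 = x
      simp [hρ, hx0]
    rw [this, Ultrafilter.map_id]
  set Y : Set (Ultrafilter {x : R // x ≠ 0}) :=
    (fun u : Ultrafilter {x : R // x ≠ 0} => u.map Subtype.val) ⁻¹' Cset with hY
  have hYli : LIdeal Y := by
    refine ⟨⟨q₀, by simp only [hY, Set.mem_preimage]; rw [hΦq₀]; exact hp₀C⟩,
      hCclosed.preimage (umap_continuous _), ?_⟩
    intro u q hq
    have hcont : Continuous fun v : Ultrafilter {x : R // x ≠ 0} => (v * q).map Subtype.val :=
      (umap_continuous _).comp (Ultrafilter.continuous_mul_left q)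
    have hpure : ∀ b : {x : R // x ≠ 0},
        ((pure b : Ultrafilter {x : R // x ≠ 0}) * q).map Subtype.val ∈ Cset := by
      intro b
      have h1 : ((pure b : Ultrafilter {x : R // x ≠ 0}) * q).map Subtype.val =
          (q.map Subtype.val).map ((b : R) * ·) := by
        have : (pure b : Ultrafilter {x : R // x ≠ 0}) * q = q.map (b * ·) := rfl
        rw [this, Ultrafilter.map_map, Ultrafilter.map_map]
        rfl
      rw [h1]
      exact hdil (b : R) b.2 _ hq
    have himg : (fun v : Ultrafilter {x : R // x ≠ 0} => (v * q).map Subtype.val) '' Set.univ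
        ⊆ Cset := by
      rw [← denseRange_pure.closure_range]
      refine (image_closure_subset_closure_image hcont).trans ?_
      rw [← hCclosed.closure_eq]
      apply closure_mono
      rintro _ ⟨_, ⟨b, rfl⟩, rfl⟩
      exact hpure b
    exact himg ⟨u, trivial, rfl⟩
  obtain ⟨L, hLmin, hLY⟩ := exists_minLIdeal hYli
  obtain ⟨e, heL, hee⟩ := exists_idem_of_minLIdeal hLmin
  have hemin : MinIdem e := minIdem_of_idem_mem_minLIdeal hLmin heL hee
  have heC : e.map Subtype.val ∈ Cset := hLY heL
  -- find the cell of the partition that lies in e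
  have hie : ∃ i, {x : {x : R // x ≠ 0} | (x : R) ∈ C i} ∈ e := by
    by_contra h
    push_neg at h
    have hc : ∀ i, {x : {x : R // x ≠ 0} | (x : R) ∈ C i}ᶜ ∈ e := fun i =>
      Ultrafilter.compl_mem_iff_notMem.mpr (h i)
    have hint : (⋂ i, {x : {x : R // x ≠ 0} | (x : R) ∈ C i}ᶜ) ∈ e :=
      Filter.iInter_mem.mpr hc
    have hempty : (⋂ i, {x : {x : R // x ≠ 0} | (x : R) ∈ C i}ᶜ) = ∅ := by
      rw [← Set.compl_iUnion]
      rw [Set.compl_empty_iff]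
      ext x
      simp only [Set.mem_iUnion, Set.mem_setOf_eq, Set.mem_univ, iff_true]
      have : (x : R) ∈ ⋃ i, C i := by rw [hcov]; trivial
      exact Set.mem_iUnion.mp this
    rw [hempty] at hint
    exact (Ultrafilter.nonempty_of_mem hint).ne_empty rfl
  obtain ⟨i, hie⟩ := hie
  refine ⟨i, ?_, ⟨e, isMinimalIdempotent_iff.mpr hemin, hie⟩⟩
  exact heC _ (Ultrafilter.mem_map.mpr hie)

end Assembly

/-- For an infinite integral domain `R`, every finite partition of `R` has a cell
that is both additively central in `(R,+)` and multiplicatively central in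
`(R \ {0}, ·)` if and only if `R` is a large integral domain. -/
theorem stmt_17 {R : Type*} [CommRing R] [IsDomain R] [Infinite R] :
    (∀ k : ℕ, ∀ C : Fin k → Set R, (⋃ i, C i) = Set.univ →
      ∃ i, AddCentral (C i) ∧ MulCentralNZ (C i)) ↔ IsLargeID R := by
  constructor
  · exact forward_dir
  · intro hLarge k C hcov
    exact reverse_dir hLarge k C hcov
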